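/- Let n ≥ 5. If K is a subgroup of the hyperoctahedral group Bₙ = C₂ⁿ ⋊ Sₙ of index k with 2 < k < n, then K = C₂ⁿ⁺ ⋊ Aₙ. -/

import Mathlib

open Equiv SemidirectProduct

/-- The action of permutations on sign vectors by permuting coordinates. -/
def permAction (n : ℕ) : Perm (Fin n) →* MulAut (Fin n → ℤˣ) where
  toFun σ := MulEquiv.arrowCongr σ (MulEquiv.refl ℤˣ)
  map_one' := by ext v i; rfl
  map_mul' σ τ := by ext v i; rfl

/-- The hyperoctahedral group `Bₙ = C₂ⁿ ⋊ Sₙ` as a semidirect product. -/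
abbrev HyperOct (n : ℕ) := (Fin n → ℤˣ) ⋊[permAction n] Perm (Fin n)

/-- The product-of-signs homomorphism `C₂ⁿ → {±1}`. -/
def prodHom (n : ℕ) : (Fin n → ℤˣ) →* ℤˣ := ∏ i : Fin n, Pi.evalMonoidHom (fun _ => ℤˣ) i

/-- The subgroup `C₂ⁿ⁺` of even sign vectors (an even number of `-1` entries). -/
def evenSign (n : ℕ) : Subgroup (Fin n → ℤˣ) := (prodHom n).ker

/-- The subgroup `V ⋊ P` of `Bₙ` determined by a subgroup `V` of sign vectors and a
subgroup `P` of permutations. -/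
def mix {n : ℕ} (V : Subgroup (Fin n → ℤˣ)) (P : Subgroup (Perm (Fin n))) :
    Subgroup (HyperOct n) :=
  V.map (inl : _ →* HyperOct n) ⊔ P.map (inr : _ →* HyperOct n)

namespace HyperOctAux

variable {n : ℕ}

/-- The sign vector with a single `-1`, at position `i`. -/
def e (n : ℕ) (i : Fin n) : Fin n → ℤˣ := fun x => if x = i then -1 else 1

lemma prodHom_apply (v : Fin n → ℤˣ) : prodHom n v = ∏ i : Fin n, v i := by
  simp [prodHom, MonoidHom.finset_prod_apply, Pi.evalMonoidHom_apply]

lemma prodHom_e (i : Fin n) : prodHom n (e n i) = -1 := by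
  rw [prodHom_apply]
  simp [e, Finset.prod_ite_eq']

lemma e_mul_self (i : Fin n) : e n i * e n i = 1 := by
  funext x
  simp only [e, Pi.mul_apply, Pi.one_apply]
  split <;> simp

lemma permAction_apply (σ : Perm (Fin n)) (v : Fin n → ℤˣ) (x : Fin n) :
    permAction n σ v x = v (σ⁻¹ x) := rfl

lemma permAction_e (σ : Perm (Fin n)) (i : Fin n) :
    permAction n σ (e n i) = e n (σ i) := by
  funext x
  simp only [permAction_apply, e]
  congr 1
  rw [Equiv.Perm.inv_eq_iff_eq]

lemma prodHom_permAction (σ : Perm (Fin n)) (v : Fin n → ℤˣ) :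
    prodHom n (permAction n σ v) = prodHom n v := by
  rw [prodHom_apply, prodHom_apply]
  simpa [permAction_apply] using Equiv.prod_comp σ⁻¹ v


/-- The homomorphism `Bₙ → {±1} × {±1}` recording the product of signs and the sign
of the permutation. -/
def chi (n : ℕ) : HyperOct n →* ℤˣ × ℤˣ where
  toFun g := (prodHom n g.left, Equiv.Perm.sign g.right)
  map_one' := by simp [one_left, one_right]
  map_mul' g h := by
    simp [mul_left, mul_right, map_mul, prodHom_permAction, Prod.ext_iff, mul_comm]

lemma chi_apply (g : HyperOct n) : chi n g = (prodHom n g.left, Equiv.Perm.sign g.right) := rfl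

lemma mix_eq_ker : mix (evenSign n) (alternatingGroup (Fin n)) = (chi n).ker := by
  apply le_antisymm
  · apply sup_le
    · rintro x ⟨v, hv, rfl⟩
      rw [MonoidHom.mem_ker, chi_apply, left_inl, right_inl]
      have : prodHom n v = 1 := hv
      simp [this]
    · rintro x ⟨σ, hσ, rfl⟩
      rw [MonoidHom.mem_ker, chi_apply, left_inr, right_inr]
      have : Equiv.Perm.sign σ = 1 := hσ
      simp [this]
  · intro g hg
    rw [MonoidHom.mem_ker, chi_apply, Prod.ext_iff] at hg
    rw [← inl_left_mul_inr_right g]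
    exact mul_mem
      (Subgroup.mem_sup_left ⟨g.left, hg.1, rfl⟩)
      (Subgroup.mem_sup_right ⟨g.right, hg.2, rfl⟩)

lemma chi_surjective (hn : 2 ≤ n) : Function.Surjective (chi n) := by
  rintro ⟨u, s⟩
  have h01 : (⟨0, by omega⟩ : Fin n) ≠ ⟨1, by omega⟩ := by simp [Fin.ext_iff]
  refine ⟨⟨(if u = 1 then 1 else e n ⟨0, by omega⟩),
    (if s = 1 then 1 else Equiv.swap ⟨0, by omega⟩ ⟨1, by omega⟩)⟩, ?_⟩
  rw [chi_apply]
  rcases Int.units_eq_one_or u with rfl | rfl <;>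
  rcases Int.units_eq_one_or s with rfl | rfl <;>
    simp [prodHom_e, Equiv.Perm.sign_swap h01]

lemma mix_index (hn : 2 ≤ n) :
    (mix (evenSign n) (alternatingGroup (Fin n))).index = 4 := by
  rw [mix_eq_ker, Subgroup.index_ker, MonoidHom.range_eq_top.2 (chi_surjective hn),
    Subgroup.card_top, Nat.card_eq_fintype_card]
  rfl

lemma evenSign_le_of_pairs (W : Subgroup (Fin n → ℤˣ))
    (hW : ∀ i j : Fin n, i ≠ j → e n i * e n j ∈ W) :
    evenSign n ≤ W := by
  classical
  suffices h : ∀ m (v : Fin n → ℤˣ),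
      (Finset.univ.filter fun x => v x = -1).card = m → v ∈ evenSign n → v ∈ W by
    intro v hv; exact h _ v rfl hv
  intro m
  induction m using Nat.strong_induction_on with
  | _ m ih =>
    intro v hm hv
    rcases Nat.eq_zero_or_pos m with h0 | hpos
    · have hv1 : v = 1 := by
        funext x
        have hx : x ∉ Finset.univ.filter fun x => v x = -1 := by
          subst h0
          rw [Finset.card_eq_zero] at hm
          simp [hm]
        simp only [Finset.mem_filter, Finset.mem_univ, true_and] at hx
        rcases Int.units_eq_one_or (v x) with h | h
        · exact h
        · exact absurd h hx
      rw [hv1]; exact one_mem W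
    · obtain ⟨i, hi⟩ : ∃ i, v i = -1 := by
        have : (Finset.univ.filter fun x => v x = -1).Nonempty :=
          Finset.card_pos.1 (hm ▸ hpos)
        obtain ⟨i, hi⟩ := this
        exact ⟨i, (Finset.mem_filter.1 hi).2⟩
      obtain ⟨j, hji, hj⟩ : ∃ j, j ≠ i ∧ v j = -1 := by
        by_contra hcon
        push_neg at hcon
        have hone : ∀ x, x ≠ i → v x = 1 := by
          intro x hx
          rcases Int.units_eq_one_or (v x) with h | h
          · exact h
          · exact absurd h (hcon x hx)
        have : prodHom n v = -1 := by
          rw [prodHom_apply, Finset.prod_eq_single i (fun b _ hb => hone b hb)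
            (fun h => absurd (Finset.mem_univ i) h), hi]
        have hker : prodHom n v = 1 := hv
        rw [hker] at this
        exact absurd this (by decide)
      set w := v * e n i * e n j with hw
      have hvw : v = w * (e n j * e n i) := by
        rw [hw, mul_assoc, mul_assoc, ← mul_assoc (e n j), e_mul_self, one_mul,
          e_mul_self, mul_one]
      have hwmem : w ∈ evenSign n := by
        have : prodHom n w = 1 := by
          rw [hw, map_mul, map_mul, prodHom_e, prodHom_e]
          have hker : prodHom n v = 1 := hv
          rw [hker]; decide
        exact this
      have hwx : ∀ x, x ≠ i → x ≠ j → w x = v x := by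
        intro x hxi hxj
        simp [hw, e, Pi.mul_apply, hxi, hxj]
      have hwi : w i = 1 := by
        simp [hw, e, Pi.mul_apply, hi, Ne.symm hji]
      have hwj : w j = 1 := by
        simp [hw, e, Pi.mul_apply, hj, hji]
      have hss : (Finset.univ.filter fun x => w x = -1) ⊂
          (Finset.univ.filter fun x => v x = -1) := by
        constructor
        · intro x hx
          simp only [Finset.mem_filter, Finset.mem_univ, true_and] at hx ⊢
          by_cases hxi : x = i
          · subst hxi; rw [hwi] at hx; exact absurd hx (by decide)
          by_cases hxj : x = j
          · subst hxj; rw [hwj] at hx; exact absurd hx (by decide)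
          rw [← hwx x hxi hxj]; exact hx
        · intro hsub
          have := hsub (by simp [hi] : i ∈ Finset.univ.filter fun x => v x = -1)
          simp only [Finset.mem_filter, Finset.mem_univ, true_and, hwi] at this
          exact absurd this (by decide)
      have hcard : (Finset.univ.filter fun x => w x = -1).card < m :=
        hm ▸ Finset.card_lt_card hss
      have hwW : w ∈ W := ih _ hcard w rfl hwmem
      rw [hvw]
      exact mul_mem hwW (hW j i hji)

lemma exists_not_mem4 (hn : 5 ≤ n) (a b c d : Fin n) :
    ∃ x : Fin n, x ≠ a ∧ x ≠ b ∧ x ≠ c ∧ x ≠ d := by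
  classical
  by_contra h
  push_neg at h
  have hsub : (Finset.univ : Finset (Fin n)) ⊆ {a, b, c, d} := by
    intro x _
    by_contra hx
    simp only [Finset.mem_insert, Finset.mem_singleton, not_or] at hx
    exact hx.2.2.2 (h x hx.1 hx.2.1 hx.2.2.1)
  have h1 := Finset.card_le_card hsub
  have h2 : ({a, b, c, d} : Finset (Fin n)).card ≤ 4 := by
    apply le_trans (Finset.card_insert_le _ _)
    have h3 : ({b, c, d} : Finset (Fin n)).card ≤ 3 := by
      apply le_trans (Finset.card_insert_le _ _)
      have h4 : ({c, d} : Finset (Fin n)).card ≤ 2 := by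
        apply le_trans (Finset.card_insert_le _ _)
        simp
      omega
    omega
  rw [Finset.card_univ, Fintype.card_fin] at h1
  omega

lemma swap_disjoint {a c b d : Fin n} (h1 : b ≠ a) (h2 : b ≠ c) (h3 : d ≠ a) (h4 : d ≠ c) :
    (Equiv.swap b d).Disjoint (Equiv.swap a c) := by
  intro y
  by_cases hyb : y = b
  · right; subst hyb; exact Equiv.swap_apply_of_ne_of_ne h1 h2
  by_cases hyd : y = d
  · right; subst hyd; exact Equiv.swap_apply_of_ne_of_ne h3 h4
  · left; exact Equiv.swap_apply_of_ne_of_ne hyb hyd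

lemma alternating_le_of_normal (hn : 5 ≤ n) (T : Subgroup (Perm (Fin n)))
    (hNorm : T.Normal) (hT : T ≠ ⊥) : alternatingGroup (Fin n) ≤ T := by
  classical
  obtain ⟨g, hgT, hg3⟩ : ∃ g ∈ T, Equiv.Perm.IsThreeCycle g := by
    obtain ⟨σ, hσT, hσ1⟩ : ∃ σ ∈ T, σ ≠ 1 := by
      by_contra h
      push_neg at h
      exact hT ((Subgroup.eq_bot_iff_forall T).2 h)
    obtain ⟨a, ha⟩ : ∃ a, σ a ≠ a := by
      by_contra h
      push_neg at h
      exact hσ1 (Equiv.ext h)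
    obtain ⟨c, hca, hcb, hcs, -⟩ := exists_not_mem4 hn a (σ a) (σ⁻¹ a) (σ⁻¹ a)
    have hπT : Equiv.swap (σ a) (σ c) * Equiv.swap a c ∈ T := by
      have h2 : Equiv.swap a c * σ⁻¹ * (Equiv.swap a c)⁻¹ ∈ T :=
        hNorm.conj_mem _ (inv_mem hσT) _
      have h3 := mul_mem hσT h2
      have he : Equiv.swap (σ a) (σ c) * Equiv.swap a c
          = σ * (Equiv.swap a c * σ⁻¹ * (Equiv.swap a c)⁻¹) := by
        rw [Equiv.swap_apply_apply, Equiv.swap_inv]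
        group
      rw [he]
      exact h3
    have hba : σ a ≠ a := ha
    have hdb : σ c ≠ σ a := fun h => hca (σ.injective h)
    have hda : σ c ≠ a := fun h => hcs (by rw [← h, Equiv.Perm.eq_inv_iff_eq])
    by_cases hdc : σ c = c
    · refine ⟨_, hπT, ?_⟩
      rw [hdc, Equiv.swap_comm (σ a) c, Equiv.swap_comm a c]
      exact Equiv.Perm.isThreeCycle_swap_mul_swap_same hcb hca hba
    · obtain ⟨x, hxa, hxb, hxc, hxd⟩ := exists_not_mem4 hn a (σ a) c (σ c)
      have hπ'T : Equiv.swap (σ a) (σ c) * Equiv.swap a x ∈ T := by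
        have hconj := hNorm.conj_mem _ hπT (Equiv.swap c x)
        have he : Equiv.swap c x * (Equiv.swap (σ a) (σ c) * Equiv.swap a c) *
            (Equiv.swap c x)⁻¹
            = Equiv.swap (σ a) (σ c) * Equiv.swap a x := by
          have e0 : Equiv.swap c x * (Equiv.swap (σ a) (σ c) * Equiv.swap a c) *
              (Equiv.swap c x)⁻¹
              = (Equiv.swap c x * Equiv.swap (σ a) (σ c) * (Equiv.swap c x)⁻¹) *
                (Equiv.swap c x * Equiv.swap a c * (Equiv.swap c x)⁻¹) := by group
          rw [e0, ← Equiv.swap_apply_apply, ← Equiv.swap_apply_apply]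
          congr 1
          · congr 1
            · exact Equiv.swap_apply_of_ne_of_ne (fun h => hcb h.symm) (fun h => hxb h.symm)
            · exact Equiv.swap_apply_of_ne_of_ne hdc (fun h => hxd h.symm)
          · congr 1
            · exact Equiv.swap_apply_of_ne_of_ne (fun h => hca h.symm) (fun h => hxa h.symm)
            · exact Equiv.swap_apply_left c x
        rw [← he]
        exact hconj
      have hLT := mul_mem hπT (inv_mem hπ'T)
      refine ⟨_, hLT, ?_⟩
      have hc1 : Commute (Equiv.swap (σ a) (σ c)) (Equiv.swap a c) :=
        (swap_disjoint hba (fun h => hcb h.symm) hda hdc).commute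
      have hc2 : Commute (Equiv.swap (σ a) (σ c)) (Equiv.swap a x) :=
        (swap_disjoint hba (fun h => hxb h.symm) hda (fun h => hxd h.symm)).commute
      have he : (Equiv.swap (σ a) (σ c) * Equiv.swap a c) *
          (Equiv.swap (σ a) (σ c) * Equiv.swap a x)⁻¹
          = Equiv.swap a c * Equiv.swap a x := by
        rw [mul_inv_rev, Equiv.swap_inv, Equiv.swap_inv]
        calc Equiv.swap (σ a) (σ c) * Equiv.swap a c *
              (Equiv.swap a x * Equiv.swap (σ a) (σ c))
            = Equiv.swap a c * Equiv.swap (σ a) (σ c) *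
              (Equiv.swap a x * Equiv.swap (σ a) (σ c)) := by rw [hc1.eq]
          _ = Equiv.swap a c * (Equiv.swap (σ a) (σ c) * Equiv.swap a x) *
              Equiv.swap (σ a) (σ c) := by group
          _ = Equiv.swap a c * (Equiv.swap a x * Equiv.swap (σ a) (σ c)) *
              Equiv.swap (σ a) (σ c) := by rw [hc2.eq]
          _ = Equiv.swap a c * Equiv.swap a x *
              (Equiv.swap (σ a) (σ c) * Equiv.swap (σ a) (σ c)) := by group
          _ = Equiv.swap a c * Equiv.swap a x := by rw [Equiv.swap_mul_self, mul_one]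
      rw [he]
      exact Equiv.Perm.isThreeCycle_swap_mul_swap_same hca.symm (fun h => hxa h.symm)
        (fun h => hxc h.symm)
  rw [← Equiv.Perm.closure_three_cycles_eq_alternating, Subgroup.closure_le]
  intro h hh
  have hconj : IsConj g h :=
    Equiv.Perm.isConj_iff_cycleType_eq.2 (by rw [hg3.cycleType, hh.cycleType])
  obtain ⟨u, hu⟩ := isConj_iff.1 hconj
  exact hu ▸ hNorm.conj_mem g hgT u

instance : Finite (HyperOct n) :=
  Finite.of_injective (fun g => (g.left, g.right))
    (fun a b h => by
      cases a; cases b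
      simp only [Prod.mk.injEq] at h
      simp [h.1, h.2])

end HyperOctAux

open HyperOctAux

/-- For `n ≥ 5`, a subgroup of the hyperoctahedral group `Bₙ` of index `k` with
`2 < k < n` must be `C₂ⁿ⁺ ⋊ Aₙ`. -/
theorem subgroup_of_index_k_eq (n k : ℕ) (hn : 5 ≤ n) (K : Subgroup (HyperOct n))
    (hK : K.index = k) (hk2 : 2 < k) (hkn : k < n) :
    K = mix (evenSign n) (alternatingGroup (Fin n)) := by
  classical
  haveI : Fintype (HyperOct n ⧸ K) := Fintype.ofFinite _
  set φ := MulAction.toPermHom (HyperOct n) (HyperOct n ⧸ K) with hφ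
  have hNker : K.normalCore = φ.ker := Subgroup.normalCore_eq_ker K
  have hNnormal : K.normalCore.Normal := Subgroup.normalCore_normal K
  have hNle : K.normalCore ≤ K := Subgroup.normalCore_le K
  have hcard : Fintype.card (HyperOct n ⧸ K) = k := by
    rw [← Nat.card_eq_fintype_card, ← Subgroup.index_eq_card, hK]
  set ψ := φ.comp (inr : Perm (Fin n) →* HyperOct n) with hψ
  have hTne : ψ.ker ≠ ⊥ := by
    intro hbot
    have hinj : Function.Injective ψ := (MonoidHom.ker_eq_bot_iff ψ).1 hbot
    have hle := Fintype.card_le_of_injective ψ hinj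
    rw [Fintype.card_perm, Fintype.card_perm, hcard, Fintype.card_fin] at hle
    have hlt : Nat.factorial k < Nat.factorial n := (Nat.factorial_lt (by omega)).2 hkn
    omega
  have hA : alternatingGroup (Fin n) ≤ ψ.ker :=
    alternating_le_of_normal hn ψ.ker (MonoidHom.normal_ker ψ) hTne
  have hAN : ∀ σ : Perm (Fin n), σ ∈ alternatingGroup (Fin n) →
      (inr σ : HyperOct n) ∈ K.normalCore := by
    intro σ hσ
    have := hA hσ
    rw [MonoidHom.mem_ker, hψ, MonoidHom.comp_apply, ← MonoidHom.mem_ker, ← hNker] at this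
    exact this
  have hpair : ∀ i j : Fin n, i ≠ j →
      (inl (e n i * e n j) : HyperOct n) ∈ K.normalCore := by
    intro i j hij
    obtain ⟨a, hai, haj, -, -⟩ := exists_not_mem4 hn i j i j
    obtain ⟨b, hbi, hbj, hba, -⟩ := exists_not_mem4 hn i j a a
    set σ := Equiv.swap i j * Equiv.swap a b with hσ
    have hσA : σ ∈ alternatingGroup (Fin n) := by
      rw [Equiv.Perm.mem_alternatingGroup, hσ, map_mul,
        Equiv.Perm.sign_swap hij, Equiv.Perm.sign_swap hba.symm]
      decide
    have hσi : σ i = j := by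
      rw [hσ]
      simp only [Equiv.Perm.mul_apply]
      rw [Equiv.swap_apply_of_ne_of_ne (Ne.symm hai) (Ne.symm hbi), Equiv.swap_apply_left]
    have hmem := hAN σ hσA
    have hconj := hNnormal.conj_mem _ hmem (inl (e n i))
    have hprod := mul_mem hconj (inv_mem hmem)
    have hcalc : (inl (e n i) : HyperOct n) * inr σ * (inl (e n i))⁻¹ * (inr σ)⁻¹
        = inl (e n i * e n j) := by
      have h1 : ((inl (e n i))⁻¹ : HyperOct n) = inl (e n i) := by
        rw [← map_inv]
        congr 1
        funext x
        rcases Int.units_eq_one_or (e n i x) with h | h <;> simp [h]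
      rw [h1]
      have h2 : (inr σ : HyperOct n) * inl (e n i) * (inr σ)⁻¹
          = inl (permAction n σ (e n i)) := (inl_aut σ (e n i)).symm
      calc (inl (e n i) : HyperOct n) * inr σ * inl (e n i) * (inr σ)⁻¹
          = inl (e n i) * (inr σ * inl (e n i) * (inr σ)⁻¹) := by group
        _ = inl (e n i) * inl (permAction n σ (e n i)) := by rw [h2]
        _ = inl (e n i * e n j) := by rw [← map_mul, permAction_e, hσi]
    rw [← hcalc]
    exact hprod
  have hEN : evenSign n ≤ (K.normalCore).comap (inl : _ →* HyperOct n) :=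
    evenSign_le_of_pairs _ (fun i j hij => hpair i j hij)
  have hMK : mix (evenSign n) (alternatingGroup (Fin n)) ≤ K := by
    apply sup_le
    · rintro y ⟨v, hv, rfl⟩
      exact hNle (hEN hv)
    · rintro y ⟨σ, hσ, rfl⟩
      exact hNle (hAN σ hσ)
  have hMidx : (mix (evenSign n) (alternatingGroup (Fin n))).index = 4 :=
    mix_index (by omega)
  have hdvd : k ∣ 4 := by
    have := Subgroup.index_dvd_of_le hMK
    rwa [hK, hMidx] at this
  have hk4 : k = 4 := by
    have hle4 : k ≤ 4 := Nat.le_of_dvd (by norm_num) hdvd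
    interval_cases k
    · exact absurd hdvd (by decide)
    · rfl
  have hrel := Subgroup.relIndex_mul_index hMK
  rw [hK, hk4, hMidx] at hrel
  have hone : (mix (evenSign n) (alternatingGroup (Fin n))).relIndex K = 1 := by omega
  exact le_antisymm (Subgroup.relIndex_eq_one.1 hone) hMK
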